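/- Let n : ℕ, let s : Fin (n+1) → ℝ be injective, let β ∈ [0,1], and set k = ⌈β·(n+1)⌉ (the natural-number ceiling). Then β ≤ ( the number of permutations σ of Fin (n+1) with card { j : Fin (n+1) | s(j) ≤ s(σ(Fin.last n)) } ≤ k ) / (n+1)! ≤ β + 1/(n+1). -/

import Mathlib

open scoped Classical
open Finset

lemma fiber_card_aux (n : ℕ) (a i : Fin (n+1)) :
    (univ.filter (fun σ : Equiv.Perm (Fin (n+1)) => σ a = i)).card = n.factorial := by
  have hsame : ∀ i j : Fin (n+1),
      (univ.filter (fun σ : Equiv.Perm (Fin (n+1)) => σ a = i)).card =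
      (univ.filter (fun σ : Equiv.Perm (Fin (n+1)) => σ a = j)).card := by
    intro i j
    apply Finset.card_bij' (fun σ _ => Equiv.swap i j * σ) (fun σ _ => Equiv.swap i j * σ)
    · intro σ hσ
      simp only [mem_filter, mem_univ, true_and] at hσ ⊢
      simp [hσ]
    · intro σ hσ
      simp only [mem_filter, mem_univ, true_and] at hσ ⊢
      simp [hσ]
    · intro σ _; simp [← mul_assoc]
    · intro σ _; simp [← mul_assoc]
  have htotal : ∑ j : Fin (n+1),
      (univ.filter (fun σ : Equiv.Perm (Fin (n+1)) => σ a = j)).card =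
      (n+1).factorial := by
    have := Finset.card_eq_sum_card_fiberwise
      (f := fun σ : Equiv.Perm (Fin (n+1)) => σ a) (s := univ) (t := univ)
      (fun σ _ => mem_univ _)
    rw [← this, card_univ, Fintype.card_perm, Fintype.card_fin]
  have hconst : ∑ j : Fin (n+1),
      (univ.filter (fun σ : Equiv.Perm (Fin (n+1)) => σ a = j)).card =
      (n+1) * (univ.filter (fun σ : Equiv.Perm (Fin (n+1)) => σ a = i)).card := by
    rw [Finset.sum_congr rfl (fun j _ => hsame j i), Finset.sum_const, card_univ,
      Fintype.card_fin, smul_eq_mul]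
  have : (n+1) * (univ.filter (fun σ : Equiv.Perm (Fin (n+1)) => σ a = i)).card
      = (n+1) * n.factorial := by
    rw [← hconst, htotal, Nat.factorial_succ]
  exact Nat.eq_of_mul_eq_mul_left (Nat.succ_pos n) this

theorem conformal_permutation_coverage
    (n : ℕ) (s : Fin (n + 1) → ℝ) (hs : Function.Injective s)
    (β : ℝ) (hβ : β ∈ Set.Icc (0 : ℝ) 1)
    (k : ℕ) (hk : k = ⌈β * (n + 1)⌉₊) :
    β ≤ ((Finset.univ.filter (fun σ : Equiv.Perm (Fin (n + 1)) =>
            (Finset.univ.filter (fun j : Fin (n + 1) =>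
              s j ≤ s (σ (Fin.last n)))).card ≤ k)).card : ℝ)
          / (Nat.factorial (n + 1)) ∧
    ((Finset.univ.filter (fun σ : Equiv.Perm (Fin (n + 1)) =>
        (Finset.univ.filter (fun j : Fin (n + 1) =>
          s j ≤ s (σ (Fin.last n)))).card ≤ k)).card : ℝ)
        / (Nat.factorial (n + 1))
      ≤ β + 1 / (n + 1) := by
  set rank : Fin (n+1) → ℕ := fun i => (univ.filter (fun j => s j ≤ s i)).card with hrank
  -- rank is injective
  have rank_strict : ∀ i j : Fin (n+1), s i < s j → rank i < rank j := by
    intro i j hij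
    apply Finset.card_lt_card
    constructor
    · intro x hx
      simp only [mem_filter, mem_univ, true_and] at hx ⊢
      exact hx.trans hij.le
    · intro hsub
      have hj : j ∈ univ.filter (fun x => s x ≤ s j) := by simp
      have := hsub hj
      simp only [mem_filter, mem_univ, true_and] at this
      exact absurd this (not_le.mpr hij)
  have rank_inj : Function.Injective rank := by
    intro i j h
    by_contra hne
    rcases lt_or_gt_of_ne (fun hsij => hne (hs hsij)) with h1 | h1
    · exact absurd h (rank_strict i j h1).ne
    · exact absurd h.symm (rank_strict j i h1).ne
  -- image of rank is Icc 1 (n+1)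
  have himg : univ.image rank = Finset.Icc 1 (n+1) := by
    apply Finset.eq_of_subset_of_card_le
    · intro m hm
      simp only [mem_image, mem_univ, true_and] at hm
      obtain ⟨i, rfl⟩ := hm
      rw [Finset.mem_Icc]
      constructor
      · rw [Nat.one_le_iff_ne_zero, ← Nat.pos_iff_ne_zero, Finset.card_pos]
        exact ⟨i, by simp⟩
      · calc rank i ≤ (univ : Finset (Fin (n+1))).card := card_filter_le _ _
          _ = n+1 := by simp
    · rw [Nat.card_Icc, Finset.card_image_of_injective _ rank_inj, card_univ,
        Fintype.card_fin]
      omega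
  -- k ≤ n+1
  have hn1 : (0:ℝ) < (n:ℝ) + 1 := by positivity
  have hkle : k ≤ n + 1 := by
    rw [hk, Nat.ceil_le]
    push_cast
    nlinarith [hβ.2]
  -- card of {i | rank i ≤ k} = k
  have hcardp : (univ.filter (fun i => rank i ≤ k)).card = k := by
    have h1 : (univ.filter (fun i => rank i ≤ k)).card
        = ((univ.filter (fun i => rank i ≤ k)).image rank).card :=
      (Finset.card_image_of_injective _ rank_inj).symm
    have h2 : (univ.filter (fun i => rank i ≤ k)).image rank
        = (univ.image rank).filter (fun m => m ≤ k) := by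
      ext m
      simp only [mem_image, mem_filter, mem_univ, true_and]
      constructor
      · rintro ⟨i, hi, rfl⟩; exact ⟨⟨i, rfl⟩, hi⟩
      · rintro ⟨⟨i, rfl⟩, hm⟩; exact ⟨i, hm, rfl⟩
    rw [h1, h2, himg]
    have h3 : (Finset.Icc 1 (n+1)).filter (fun m => m ≤ k) = Finset.Icc 1 k := by
      ext m
      simp only [mem_filter, Finset.mem_Icc]
      omega
    rw [h3, Nat.card_Icc]
    omega
  -- the main count
  have hcount : (Finset.univ.filter (fun σ : Equiv.Perm (Fin (n + 1)) =>
        (Finset.univ.filter (fun j : Fin (n + 1) =>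
          s j ≤ s (σ (Fin.last n)))).card ≤ k)).card = k * n.factorial := by
    have hfib := Finset.card_eq_sum_card_fiberwise
      (f := fun σ : Equiv.Perm (Fin (n+1)) => σ (Fin.last n))
      (s := Finset.univ.filter (fun σ : Equiv.Perm (Fin (n + 1)) =>
        (Finset.univ.filter (fun j : Fin (n + 1) =>
          s j ≤ s (σ (Fin.last n)))).card ≤ k))
      (t := univ.filter (fun i => rank i ≤ k))
      (by intro σ hσ
          simp only [mem_coe, mem_filter, mem_univ, true_and] at hσ ⊢
          exact hσ)
    rw [hfib]
    have : ∀ i ∈ univ.filter (fun i => rank i ≤ k),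
        ((Finset.univ.filter (fun σ : Equiv.Perm (Fin (n + 1)) =>
          (Finset.univ.filter (fun j : Fin (n + 1) =>
            s j ≤ s (σ (Fin.last n)))).card ≤ k)).filter
          (fun σ => σ (Fin.last n) = i)).card = n.factorial := by
      intro i hi
      simp only [mem_filter, mem_univ, true_and] at hi
      rw [Finset.filter_filter]
      have heq : (Finset.univ.filter (fun σ : Equiv.Perm (Fin (n + 1)) =>
          (Finset.univ.filter (fun j : Fin (n + 1) =>
            s j ≤ s (σ (Fin.last n)))).card ≤ k ∧ σ (Fin.last n) = i))
          = Finset.univ.filter (fun σ : Equiv.Perm (Fin (n + 1)) =>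
            σ (Fin.last n) = i) := by
        ext σ
        simp only [mem_filter, mem_univ, true_and]
        constructor
        · exact fun h => h.2
        · intro h; exact ⟨by rw [h]; exact hi, h⟩
      rw [heq]
      exact fiber_card_aux n (Fin.last n) i
    rw [Finset.sum_congr rfl this, Finset.sum_const, hcardp, smul_eq_mul]
  -- now arithmetic
  rw [hcount]
  have hfac : ((n+1).factorial : ℝ) = ((n:ℝ)+1) * (n.factorial : ℝ) := by
    rw [Nat.factorial_succ]; push_cast; ring
  have hfacpos : (0:ℝ) < (n.factorial : ℝ) := by positivity
  have hratio : ((k * n.factorial : ℕ) : ℝ) / ((n+1).factorial : ℝ)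
      = (k : ℝ) / ((n:ℝ)+1) := by
    push_cast [hfac]
    rw [mul_comm ((n:ℝ)+1) _, ← div_div, mul_div_assoc, div_self hfacpos.ne', mul_one]
  rw [hratio]
  constructor
  · rw [le_div_iff₀ hn1]
    have := Nat.le_ceil (β * ((n:ℝ) + 1))
    rw [← hk] at this
    linarith
  · have hcl : (k:ℝ) < β * ((n:ℝ)+1) + 1 := by
      rw [hk]
      have h0 : (0:ℝ) ≤ β * ((n:ℝ)+1) := by nlinarith [hβ.1]
      exact_mod_cast Nat.ceil_lt_add_one h0
    rw [div_le_iff₀ hn1]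
    have : (β + 1/((n:ℝ)+1)) * ((n:ℝ)+1) = β * ((n:ℝ)+1) + 1 := by
      field_simp
    push_cast
    rw [this]
    linarith
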